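/- Let f be the CDF of N(0, σ²). Then sup_{|x|≤α} f(x)(1-f(x))/f'(x)² ≤ π·σ²·e^{α²/(2σ²)}. -/

import Mathlib

open Real

noncomputable def stdNormalPDF (t : ℝ) : ℝ := (Real.sqrt (2 * Real.pi))⁻¹ * Real.exp (-t ^ 2 / 2)

noncomputable def stdNormalCDF (x : ℝ) : ℝ := ∫ t in Set.Iic x, stdNormalPDF t

open Set MeasureTheory

lemma pdf_pos (t : ℝ) : 0 < stdNormalPDF t := by
  unfold stdNormalPDF
  positivity

lemma pdf_integrable : Integrable stdNormalPDF := by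
  have h := integrable_exp_neg_mul_sq (b := (1/2:ℝ)) (by norm_num)
  have : stdNormalPDF = fun t => (Real.sqrt (2 * Real.pi))⁻¹ * Real.exp (-(1/2) * t^2) := by
    funext t; unfold stdNormalPDF; ring_nf
  rw [this]
  exact h.const_mul _

lemma pdf_total : ∫ t, stdNormalPDF t = 1 := by
  have h := integral_gaussian (1/2 : ℝ)
  unfold stdNormalPDF
  rw [MeasureTheory.integral_const_mul]
  have : ∀ t:ℝ, Real.exp (-t^2/2) = Real.exp (-(1/2)*t^2) := by intro t; ring_nf
  simp_rw [this, h]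
  rw [inv_mul_eq_one₀]
  · congr 1; ring
  · positivity

lemma cdf_zero : stdNormalCDF 0 = 1/2 := by
  have hsym : (∫ t in Iic (0:ℝ), stdNormalPDF t) = ∫ t in Ioi (0:ℝ), stdNormalPDF t := by
    have heven : ∀ t:ℝ, stdNormalPDF t = stdNormalPDF (-t) := by
      intro t; unfold stdNormalPDF; ring_nf
    calc (∫ t in Iic (0:ℝ), stdNormalPDF t) = ∫ t in Iic (0:ℝ), stdNormalPDF (-t) := by
          simp_rw [← heven]
      _ = ∫ t in Ioi (-(0:ℝ)), stdNormalPDF t := integral_comp_neg_Iic 0 _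
      _ = ∫ t in Ioi (0:ℝ), stdNormalPDF t := by rw [neg_zero]
  have hsplit : (∫ t in Iic (0:ℝ), stdNormalPDF t) + (∫ t in Ioi (0:ℝ), stdNormalPDF t) = 1 := by
    rw [← pdf_total, ← setIntegral_union (Iic_disjoint_Ioi le_rfl) measurableSet_Ioi
      pdf_integrable.integrableOn pdf_integrable.integrableOn, Iic_union_Ioi,
      MeasureTheory.Measure.restrict_univ]
  unfold stdNormalCDF
  linarith [hsym, hsplit]

lemma cdf_nonneg (x : ℝ) : 0 ≤ stdNormalCDF x :=
  setIntegral_nonneg measurableSet_Iic (fun t _ => (pdf_pos t).le)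

lemma cdf_symm (x : ℝ) : 1 - stdNormalCDF x = stdNormalCDF (-x) := by
  have heven : ∀ t:ℝ, stdNormalPDF t = stdNormalPDF (-t) := by
    intro t; unfold stdNormalPDF; ring_nf
  have h1 : stdNormalCDF (-x) = ∫ t in Ioi x, stdNormalPDF t := by
    unfold stdNormalCDF
    calc (∫ t in Iic (-x), stdNormalPDF t) = ∫ t in Iic (-x), stdNormalPDF (-t) := by
          simp_rw [← heven]
      _ = ∫ t in Ioi (-(-x)), stdNormalPDF t := integral_comp_neg_Iic _ _
      _ = ∫ t in Ioi x, stdNormalPDF t := by rw [neg_neg]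
  have hsplit : stdNormalCDF x + (∫ t in Ioi x, stdNormalPDF t) = 1 := by
    unfold stdNormalCDF
    rw [← pdf_total, ← setIntegral_union (Iic_disjoint_Ioi le_rfl) measurableSet_Ioi
      pdf_integrable.integrableOn pdf_integrable.integrableOn, Iic_union_Ioi,
      MeasureTheory.Measure.restrict_univ]
  linarith

lemma cdf_le_one (x : ℝ) : stdNormalCDF x ≤ 1 := by
  have := cdf_nonneg (-x); have := cdf_symm x; linarith

/-- Key tail bound: `Φ(-s) ≤ (1/2) e^{-s²/2}` for `s ≥ 0`. -/
lemma cdf_tail (s : ℝ) (hs : 0 ≤ s) : stdNormalCDF (-s) ≤ (1/2) * Real.exp (-s^2/2) := by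
  have hshift : stdNormalCDF (-s) = ∫ u in Iic (0:ℝ), stdNormalPDF (u - s) := by
    unfold stdNormalCDF
    rw [← MeasureTheory.integral_indicator measurableSet_Iic,
        ← MeasureTheory.integral_indicator measurableSet_Iic]
    rw [← integral_sub_right_eq_self (fun t => (Iic (-s)).indicator stdNormalPDF t) s]
    congr 1
    funext t
    by_cases ht : t ≤ 0
    · rw [indicator_of_mem (by simpa using ht : t ∈ Iic (0:ℝ)),
          indicator_of_mem (by simp only [mem_Iic]; linarith : t - s ∈ Iic (-s))]
    · rw [indicator_of_notMem (by simpa using ht),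
          indicator_of_notMem (by simp only [mem_Iic]; intro h; exact ht (by linarith))]
  rw [hshift]
  have hbound : ∀ u ∈ Iic (0:ℝ), stdNormalPDF (u - s) ≤ Real.exp (-s^2/2) * stdNormalPDF u := by
    intro u hu
    simp only [mem_Iic] at hu
    unfold stdNormalPDF
    rw [mul_comm (Real.exp _), mul_assoc]
    apply mul_le_mul_of_nonneg_left _ (by positivity)
    rw [← Real.exp_add]
    apply Real.exp_le_exp.mpr
    nlinarith [mul_nonneg (neg_nonneg.mpr hu) hs]
  have hint1 : IntegrableOn (fun u => stdNormalPDF (u - s)) (Iic 0) :=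
    ((pdf_integrable.comp_sub_right s).integrableOn)
  have hint2 : IntegrableOn (fun u => Real.exp (-s^2/2) * stdNormalPDF u) (Iic 0) :=
    (pdf_integrable.const_mul _).integrableOn
  calc (∫ u in Iic (0:ℝ), stdNormalPDF (u - s))
      ≤ ∫ u in Iic (0:ℝ), Real.exp (-s^2/2) * stdNormalPDF u :=
        setIntegral_mono_on hint1 hint2 measurableSet_Iic hbound
    _ = Real.exp (-s^2/2) * stdNormalCDF 0 := by
        rw [MeasureTheory.integral_const_mul]; rfl
    _ = (1/2) * Real.exp (-s^2/2) := by rw [cdf_zero]; ring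

lemma cdf_prod_le (t : ℝ) : stdNormalCDF t * (1 - stdNormalCDF t) ≤ (1/2) * Real.exp (-t^2/2) := by
  rcases le_or_gt 0 t with ht | ht
  · calc stdNormalCDF t * (1 - stdNormalCDF t) ≤ 1 * (1 - stdNormalCDF t) := by
          apply mul_le_mul_of_nonneg_right (cdf_le_one t); linarith [cdf_le_one t]
      _ = stdNormalCDF (-t) := by rw [one_mul, cdf_symm]
      _ ≤ (1/2) * Real.exp (-t^2/2) := cdf_tail t ht
  · have h : stdNormalCDF t = stdNormalCDF (-(-t)) := by rw [neg_neg]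
    calc stdNormalCDF t * (1 - stdNormalCDF t) ≤ stdNormalCDF t * 1 := by
          apply mul_le_mul_of_nonneg_left _ (cdf_nonneg t); linarith [cdf_nonneg t]
      _ = stdNormalCDF (-(-t)) := by rw [mul_one, neg_neg]
      _ ≤ (1/2) * Real.exp (-(-t)^2/2) := cdf_tail (-t) (by linarith)
      _ = (1/2) * Real.exp (-t^2/2) := by ring_nf

lemma pdf_continuous : Continuous stdNormalPDF := by
  unfold stdNormalPDF; continuity

lemma cdf_hasDeriv (x : ℝ) : HasDerivAt stdNormalCDF (stdNormalPDF x) x := by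
  have heq : stdNormalCDF = fun u => stdNormalCDF 0 + ∫ t in (0:ℝ)..u, stdNormalPDF t := by
    funext u
    rw [← intervalIntegral.integral_Iic_sub_Iic pdf_integrable.integrableOn
      pdf_integrable.integrableOn]
    unfold stdNormalCDF; ring
  rw [heq]
  have h := intervalIntegral.integral_hasDerivAt_right
    (pdf_integrable.intervalIntegrable (a := 0) (b := x))
    (pdf_continuous.stronglyMeasurableAtFilter _ _)
    pdf_continuous.continuousAt
  simpa using h.const_add (stdNormalCDF 0)


/-- For `f` the CDF of `N(0, σ²)`: `sup_{|x| ≤ α} f(x)(1 - f(x))/f'(x)² ≤ π σ² e^{α²/(2σ²)}`. -/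
theorem stmt11 (σ α : ℝ) (hσ : 0 < σ) (hα : 0 < α)
    (f : ℝ → ℝ) (hf : ∀ x, f x = stdNormalCDF (x / σ)) :
    ∀ x, |x| ≤ α →
      f x * (1 - f x) / (deriv f x) ^ 2 ≤ Real.pi * σ ^ 2 * Real.exp (α ^ 2 / (2 * σ ^ 2)) := by
  intro x hx
  set t := x / σ with ht
  have hfx : HasDerivAt f (stdNormalPDF t * σ⁻¹) x := by
    have h1 : HasDerivAt (fun y : ℝ => y / σ) σ⁻¹ x := by
      simpa using (hasDerivAt_id x).div_const σ
    have h2 := (cdf_hasDeriv t).comp x h1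
    have : f = fun y => stdNormalCDF (y / σ) := funext hf
    rw [this]
    exact h2
  rw [hf x, hfx.deriv]
  have hpdf : stdNormalPDF t ^ 2 = (2 * Real.pi)⁻¹ * Real.exp (-t^2) := by
    unfold stdNormalPDF
    rw [mul_pow, ← Real.exp_nat_mul]
    rw [← Real.sqrt_inv, Real.sq_sqrt (by positivity)]
    congr 1
    ring
  have hden : (stdNormalPDF t * σ⁻¹) ^ 2 = (2 * Real.pi)⁻¹ * Real.exp (-t^2) * σ⁻¹^2 := by
    rw [mul_pow, hpdf]
  rw [hden, div_le_iff₀ (by positivity)]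
  have hprod := cdf_prod_le t
  have htsq : t ^ 2 ≤ α ^ 2 / σ ^ 2 := by
    rw [ht, div_pow]
    apply div_le_div_of_nonneg_right _ (by positivity)
    · exact sq_le_sq' (by linarith [abs_le.mp hx]) (by linarith [abs_le.mp hx])
  have hexp : Real.exp (-t^2/2) ≤ Real.exp (α^2/(2*σ^2)) * Real.exp (-t^2) := by
    rw [← Real.exp_add]
    apply Real.exp_le_exp.mpr
    have : α^2/(2*σ^2) = (α^2/σ^2)/2 := by ring
    linarith [htsq]
  calc stdNormalCDF t * (1 - stdNormalCDF t)
      ≤ (1/2) * Real.exp (-t^2/2) := hprod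
    _ ≤ (1/2) * (Real.exp (α^2/(2*σ^2)) * Real.exp (-t^2)) := by
        apply mul_le_mul_of_nonneg_left hexp; norm_num
    _ = Real.pi * σ^2 * Real.exp (α^2/(2*σ^2)) * ((2*Real.pi)⁻¹ * Real.exp (-t^2) * σ⁻¹^2) := by
        field_simp
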